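/- Every permutation of {1,…,n} can be partitioned into at most 2⌈√n⌉ monotone subsequences, i.e., the index set {1,…,n} can be partitioned into at most 2⌈√n⌉ blocks such that π is monotone (increasing or decreasing) on each block. -/

import Mathlib

open Function Finset

variable {α : Type*} [LinearOrder α]

theorem my_es {r s n : ℕ} {f : Fin n → α} (hn : r * s < n) (hf : Injective f) :
    (∃ t : Finset (Fin n), r < #t ∧ StrictMonoOn f ↑t) ∨
      ∃ t : Finset (Fin n), s < #t ∧ StrictAntiOn f ↑t := by
  let inc_sequences_ending_in : Fin n → Finset (Finset (Fin n)) := fun i =>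
    univ.powerset.filter fun t => Finset.max t = i ∧ StrictMonoOn f ↑t
  let dec_sequences_ending_in : Fin n → Finset (Finset (Fin n)) := fun i =>
    univ.powerset.filter fun t => Finset.max t = i ∧ StrictAntiOn f ↑t
  have inc_i : ∀ i, {i} ∈ inc_sequences_ending_in i := fun i => by
    simp [inc_sequences_ending_in, StrictMonoOn]
  have dec_i : ∀ i, {i} ∈ dec_sequences_ending_in i := fun i => by
    simp [dec_sequences_ending_in, StrictAntiOn]
  let ab' : Fin n → ℕ × ℕ := by
    intro i
    apply
      (max' ((inc_sequences_ending_in i).image card) (Nonempty.image ⟨{i}, inc_i i⟩ _),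
        max' ((dec_sequences_ending_in i).image card) (Nonempty.image ⟨{i}, dec_i i⟩ _))
  generalize hab : ab' = ab
  rsuffices ⟨i, hi⟩ : ∃ i, r < (ab i).1 ∨ s < (ab i).2
  · refine Or.imp ?_ ?_ hi
    on_goal 1 =>
      have : (ab i).1 ∈ image card (inc_sequences_ending_in i) := by
        simp only [← hab]; exact max'_mem _ (Nonempty.image ⟨{i}, inc_i i⟩ _)
    on_goal 2 =>
      have : (ab i).2 ∈ image card (dec_sequences_ending_in i) := by
        simp only [← hab]; exact max'_mem _ (Nonempty.image ⟨{i}, dec_i i⟩ _)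
    all_goals
      intro hi
      rw [mem_image] at this
      obtain ⟨t, ht₁, ht₂⟩ := this
      refine ⟨t, by rwa [ht₂], ?_⟩
      rw [mem_filter] at ht₁
      apply ht₁.2.2
  have : Injective ab := by
    simp only [← hab]
    apply Function.Injective.of_lt_imp_ne
    intro i j k q
    injection q with q₁ q₂
    cases lt_or_gt_of_ne fun _ => ne_of_lt ‹i < j› (hf ‹f i = f j›)
    on_goal 1 =>
      apply ne_of_lt _ q₁
      have : (ab' i).1 ∈ image card (inc_sequences_ending_in i) := by exact max'_mem _ (Nonempty.image ⟨{i}, inc_i i⟩ _)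
    on_goal 2 =>
      apply ne_of_lt _ q₂
      have : (ab' i).2 ∈ image card (dec_sequences_ending_in i) := by exact max'_mem _ (Nonempty.image ⟨{i}, dec_i i⟩ _)
    all_goals
      rw [Nat.lt_iff_add_one_le]
      apply le_max'
      rw [mem_image] at this ⊢
      rcases this with ⟨t, ht₁, ht₂⟩
      rw [mem_filter] at ht₁
      have : t.max = i := by simp only [ht₁.2.1]
      refine ⟨insert j t, ?_, ?_⟩
      · rw [mem_filter]
        refine ⟨?_, ?_, ?_⟩
        · rw [mem_powerset]; apply subset_univ
        · convert max_insert (a := j) (s := t)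
          rw [ht₁.2.1, max_eq_left]
          apply WithBot.coe_le_coe.mpr (le_of_lt ‹i < j›)
        simp only [StrictMonoOn, StrictAntiOn, coe_insert, Set.mem_insert_iff, mem_coe]
        rintro x ⟨rfl | _⟩ y ⟨rfl | _⟩ _
        · apply (irrefl _ ‹j < j›).elim
        · exfalso
          apply not_le_of_gt (_root_.trans ‹i < j› ‹j < y›) (le_max_of_eq ‹y ∈ t› ‹t.max = i›)
        · first
          | apply lt_of_le_of_lt _ ‹f i < f j›
          | apply lt_of_lt_of_le ‹f j < f i› _
          rcases lt_or_eq_of_le (le_max_of_eq ‹x ∈ t› ‹t.max = i›) with (_ | rfl)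
          · apply le_of_lt (ht₁.2.2 ‹x ∈ t› (mem_of_max ‹t.max = i›) ‹x < i›)
          · rfl
        · apply ht₁.2.2 ‹x ∈ t› ‹y ∈ t› ‹x < y›
      · rw [card_insert_of_notMem, ht₂]
        intro
        apply not_le_of_gt ‹i < j› (le_max_of_eq ‹j ∈ t› ‹t.max = i›)
  by_contra! q
  let ran : Finset (ℕ × ℕ) := (range r).image Nat.succ ×ˢ (range s).image Nat.succ
  have : image ab univ ⊆ ran := by
    rintro ⟨x₁, x₂⟩
    simp only [ran, mem_image, exists_prop, mem_range, mem_univ, mem_product, true_and,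
      Prod.ext_iff]
    rintro ⟨i, rfl, rfl⟩
    specialize q i
    have z : 1 ≤ (ab i).1 ∧ 1 ≤ (ab i).2 := by
      simp only [← hab]
      constructor <;>
        · apply le_max'
          rw [mem_image]
          exact ⟨{i}, by solve_by_elim, card_singleton i⟩
    exact ⟨⟨(ab i).1 - 1, by omega⟩, (ab i).2 - 1, by omega⟩
  apply not_le_of_gt hn
  simpa [ran, Nat.succ_injective, card_image_of_injective, ‹Injective ab›] using card_le_card this

theorem es_subset {n t : ℕ} {f : Fin n → α} (hf : Injective f) (S : Finset (Fin n))
    (h : t * t < S.card) :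
    ∃ T : Finset (Fin n), T ⊆ S ∧ T.card = t + 1 ∧
      (StrictMonoOn f ↑T ∨ StrictAntiOn f ↑T) := by
  let e : Fin S.card ↪o Fin n := S.orderEmbOfFin rfl
  have hmem : ∀ a, e a ∈ S := fun a => S.orderEmbOfFin_mem rfl a
  have hinj : Injective (f ∘ e) := hf.comp e.injective
  have H := my_es (r := t) (s := t) (f := f ∘ e) h hinj
  obtain ⟨T', hT'card, hT'⟩ | ⟨T', hT'card, hT'⟩ := H <;>
  · obtain ⟨T'', hsub, hcard⟩ := Finset.exists_subset_card_eq (n := t + 1) hT'card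
    refine ⟨T''.image (fun a => e a), ?_, ?_, ?_⟩
    · intro x hx
      obtain ⟨a, _, rfl⟩ := Finset.mem_image.mp hx
      exact hmem a
    · rw [Finset.card_image_of_injective _ e.injective, hcard]
    · have hT'' := hT'.mono (Finset.coe_subset.mpr hsub)
      first
        | · left
            rintro x hx y hy hxy
            obtain ⟨a, ha, rfl⟩ := Finset.mem_image.mp (Finset.mem_coe.mp hx)
            obtain ⟨b, hb, rfl⟩ := Finset.mem_image.mp (Finset.mem_coe.mp hy)
            exact hT'' ha hb (e.lt_iff_lt.mp hxy)
        | · right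
            rintro x hx y hy hxy
            obtain ⟨a, ha, rfl⟩ := Finset.mem_image.mp (Finset.mem_coe.mp hx)
            obtain ⟨b, hb, rfl⟩ := Finset.mem_image.mp (Finset.mem_coe.mp hy)
            exact hT'' ha hb (e.lt_iff_lt.mp hxy)

theorem key {n : ℕ} {f : Fin n → α} (hf : Injective f) :
    ∀ (t : ℕ) (S : Finset (Fin n)), S.card ≤ t * t →
      ∃ c : Fin n → ℕ, (∀ i ∈ S, c i < 2 * t) ∧
        ∀ j : ℕ, StrictMonoOn f {i | i ∈ S ∧ c i = j} ∨
          StrictAntiOn f {i | i ∈ S ∧ c i = j} := by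
  intro t
  induction t with
  | zero =>
    intro S hS
    rw [Nat.le_zero, Finset.card_eq_zero] at hS
    subst hS
    exact ⟨fun _ => 0, by simp, fun j => Or.inl (by rintro x ⟨hx, -⟩; simp at hx)⟩
  | succ t ih =>
    intro S hS
    rcases le_or_gt S.card (t * t) with hle | hlt
    · obtain ⟨c, hc1, hc2⟩ := ih S hle
      exact ⟨c, fun i hi => lt_of_lt_of_le (hc1 i hi) (by omega), hc2⟩
    obtain ⟨T₁, hT₁S, hT₁card, hT₁mono⟩ := es_subset hf S hlt
    rcases le_or_gt (S \ T₁).card (t * t) with h1 | h1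
    · obtain ⟨c₁, hc1, hc2⟩ := ih (S \ T₁) h1
      refine ⟨fun i => if i ∈ T₁ then 2 * t else c₁ i, ?_, ?_⟩
      · intro i hi
        by_cases h : i ∈ T₁
        · simp only [if_pos h]; omega
        · simp only [h, if_neg, if_false]
          have := hc1 i (Finset.mem_sdiff.mpr ⟨hi, h⟩)
          omega
      · intro j
        rcases eq_or_ne j (2 * t) with rfl | hj
        · have hset : {i | i ∈ S ∧ (if i ∈ T₁ then 2 * t else c₁ i) = 2 * t} = ↑T₁ := by
            ext i
            simp only [Set.mem_setOf_eq, Finset.mem_coe]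
            constructor
            · rintro ⟨hiS, hval⟩
              by_contra h
              rw [if_neg h] at hval
              exact absurd hval (Nat.ne_of_lt (hc1 i (Finset.mem_sdiff.mpr ⟨hiS, h⟩)))
            · intro h
              exact ⟨hT₁S h, by rw [if_pos h]⟩
          rw [hset]
          exact hT₁mono
        · have hset : {i | i ∈ S ∧ (if i ∈ T₁ then 2 * t else c₁ i) = j}
              = {i | i ∈ S \ T₁ ∧ c₁ i = j} := by
            ext i
            simp only [Set.mem_setOf_eq, Finset.mem_sdiff]
            constructor
            · rintro ⟨hiS, hval⟩
              by_cases h : i ∈ T₁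
              · rw [if_pos h] at hval; exact absurd hval.symm hj
              · rw [if_neg h] at hval; exact ⟨⟨hiS, h⟩, hval⟩
            · rintro ⟨⟨hiS, h⟩, hval⟩
              exact ⟨hiS, by rw [if_neg h]; exact hval⟩
          rw [hset]
          exact hc2 j
    · obtain ⟨T₂, hT₂S, hT₂card, hT₂mono⟩ := es_subset hf (S \ T₁) h1
      have hcard2 : ((S \ T₁) \ T₂).card ≤ t * t := by
        rw [Finset.card_sdiff_of_subset hT₂S, Finset.card_sdiff_of_subset hT₁S, hT₁card, hT₂card]
        have := Finset.card_le_card hT₁S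
        have hexp : (t + 1) * (t + 1) = t * t + 2 * t + 1 := by ring
        omega
      obtain ⟨c₂, hc1, hc2⟩ := ih ((S \ T₁) \ T₂) hcard2
      refine ⟨fun i => if i ∈ T₁ then 2 * t else if i ∈ T₂ then 2 * t + 1 else c₂ i, ?_, ?_⟩
      · intro i hi
        by_cases h : i ∈ T₁
        · simp only [h, if_pos]; omega
        by_cases h' : i ∈ T₂
        · simp only [h, h', if_neg, if_pos, if_false]; omega
        · simp only [h, h', if_neg, if_false]
          have := hc1 i (by simp [Finset.mem_sdiff, hi, h, h'])
          omega
      · intro j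
        have hT₂S' : T₂ ⊆ S := hT₂S.trans (Finset.sdiff_subset)
        have hdisj : ∀ i ∈ T₂, i ∉ T₁ := fun i hi => (Finset.mem_sdiff.mp (hT₂S hi)).2
        rcases eq_or_ne j (2 * t) with rfl | hj
        · have hset : {i | i ∈ S ∧
              (if i ∈ T₁ then 2 * t else if i ∈ T₂ then 2 * t + 1 else c₂ i) = 2 * t} = ↑T₁ := by
            ext i
            simp only [Set.mem_setOf_eq, Finset.mem_coe]
            constructor
            · rintro ⟨hiS, hval⟩
              by_contra h
              rw [if_neg h] at hval
              by_cases h' : i ∈ T₂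
              · rw [if_pos h'] at hval; omega
              · rw [if_neg h'] at hval
                exact absurd hval
                  (Nat.ne_of_lt (hc1 i (by simp [Finset.mem_sdiff, hiS, h, h'])))
            · intro h
              exact ⟨hT₁S h, by rw [if_pos h]⟩
          rw [hset]; exact hT₁mono
        rcases eq_or_ne j (2 * t + 1) with rfl | hj'
        · have hset : {i | i ∈ S ∧
              (if i ∈ T₁ then 2 * t else if i ∈ T₂ then 2 * t + 1 else c₂ i) = 2 * t + 1}
              = ↑T₂ := by
            ext i
            simp only [Set.mem_setOf_eq, Finset.mem_coe]
            constructor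
            · rintro ⟨hiS, hval⟩
              by_cases h : i ∈ T₁
              · rw [if_pos h] at hval; omega
              rw [if_neg h] at hval
              by_contra h'
              rw [if_neg h'] at hval
              have := hc1 i (by simp [Finset.mem_sdiff, hiS, h, h'])
              omega
            · intro h
              exact ⟨hT₂S' h, by rw [if_neg (hdisj i h), if_pos h]⟩
          rw [hset]; exact hT₂mono
        · have hset : {i | i ∈ S ∧
              (if i ∈ T₁ then 2 * t else if i ∈ T₂ then 2 * t + 1 else c₂ i) = j}
              = {i | i ∈ (S \ T₁) \ T₂ ∧ c₂ i = j} := by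
            ext i
            simp only [Set.mem_setOf_eq, Finset.mem_sdiff]
            constructor
            · rintro ⟨hiS, hval⟩
              by_cases h : i ∈ T₁
              · rw [if_pos h] at hval; exact absurd hval.symm hj
              rw [if_neg h] at hval
              by_cases h' : i ∈ T₂
              · rw [if_pos h'] at hval; exact absurd hval.symm hj'
              · rw [if_neg h'] at hval; exact ⟨⟨⟨hiS, h⟩, h'⟩, hval⟩
            · rintro ⟨⟨⟨hiS, h⟩, h'⟩, hval⟩
              exact ⟨hiS, by rw [if_neg h, if_neg h']; exact hval⟩
          rw [hset]; exact hc2 j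


/-- Every permutation of `{1,…,n}` can be partitioned into at most `2⌈√n⌉`
monotone subsequences. -/
theorem stmt_1 (n : ℕ) (π : Equiv.Perm (Fin n)) :
    ∃ (k : ℕ) (c : Fin n → Fin k), k ≤ 2 * ⌈Real.sqrt n⌉₊ ∧
      ∀ j : Fin k, StrictMonoOn π {i | c i = j} ∨ StrictAntiOn π {i | c i = j} := by
  rcases Nat.eq_zero_or_pos n with rfl | hn
  · exact ⟨0, fun i => i.elim0, Nat.zero_le _, fun j => j.elim0⟩
  · set t := ⌈Real.sqrt n⌉₊ with ht
    have hn' : n ≤ t * t := by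
      have h1 : Real.sqrt n ≤ t := Nat.le_ceil _
      have h2 : (n : ℝ) ≤ (t : ℝ) * t := by
        calc (n : ℝ) = Real.sqrt n * Real.sqrt n := (Real.mul_self_sqrt (by positivity)).symm
        _ ≤ (t : ℝ) * t := mul_le_mul h1 h1 (Real.sqrt_nonneg _) (by positivity)
      exact_mod_cast h2
    obtain ⟨c, hc1, hc2⟩ := key (f := fun i => π i) π.injective t Finset.univ
      (by simpa using hn')
    refine ⟨2 * t, fun i => ⟨c i, hc1 i (Finset.mem_univ i)⟩, le_rfl, fun j => ?_⟩
    have hset : {i : Fin n | (⟨c i, hc1 i (Finset.mem_univ i)⟩ : Fin (2 * t)) = j}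
        = {i : Fin n | i ∈ Finset.univ ∧ c i = (j : ℕ)} := by
      ext i
      simp [Fin.ext_iff]
    rcases hc2 (j : ℕ) with h | h
    · left; rw [hset]; exact h
    · right; rw [hset]; exact h
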